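/- Let f, g : I → ℝ be C³ on the open interval I with nonvanishing Wronskian, and let D(x,y) := f(x)g(y) − f(y)g(x). Then for all x ∈ I, ∂₁³D(x,x)/∂₁D(x,x) = Φ'_{f,g}(x) + Φ_{f,g}(x)² + Ψ_{f,g}(x), where Φ_{f,g}(x) := ∂₁²D(x,x)/∂₁D(x,x) and Ψ_{f,g}(x) := −∂₁²∂₂D(x,x)/∂₁D(x,x). -/

import Mathlib

/-- Partial derivative of a two-variable real function in its first variable. -/
noncomputable def pd1 (D : ℝ → ℝ → ℝ) : ℝ → ℝ → ℝ := fun x y => deriv (fun u => D u y) x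

/-- Partial derivative of a two-variable real function in its second variable. -/
noncomputable def pd2 (D : ℝ → ℝ → ℝ) : ℝ → ℝ → ℝ := fun x y => deriv (fun v => D x v) y

theorem third_diagonal_derivative_formula
    (I : Set ℝ) (hIne : I.Nonempty) (hIopen : IsOpen I) (hIconn : I.OrdConnected)
    (f g : ℝ → ℝ) (hf3 : ContDiffOn ℝ 3 f I) (hg3 : ContDiffOn ℝ 3 g I)
    (D : ℝ → ℝ → ℝ) (hD : ∀ x y, D x y = f x * g y - f y * g x)
    (hW : ∀ x ∈ I, pd1 D x x ≠ 0)
    (Φ Ψ : ℝ → ℝ)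
    (hΦ : ∀ x ∈ I, Φ x = pd1 (pd1 D) x x / pd1 D x x)
    (hΨ : ∀ x ∈ I, Ψ x = -(pd2 (pd1 (pd1 D)) x x / pd1 D x x)) :
    ∀ x ∈ I, pd1 (pd1 (pd1 D)) x x / pd1 D x x = deriv Φ x + (Φ x) ^ 2 + Ψ x := by
  set f1 := deriv f with hf1def
  set g1 := deriv g with hg1def
  set f2 := deriv f1 with hf2def
  set g2 := deriv g1 with hg2def
  -- differentiability facts
  have hf2c : ContDiffOn ℝ 2 f1 I := hf3.deriv_of_isOpen hIopen (by norm_num)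
  have hg2c : ContDiffOn ℝ 2 g1 I := hg3.deriv_of_isOpen hIopen (by norm_num)
  have hf1c : ContDiffOn ℝ 1 f2 I := hf2c.deriv_of_isOpen hIopen (by norm_num)
  have hg1c : ContDiffOn ℝ 1 g2 I := hg2c.deriv_of_isOpen hIopen (by norm_num)
  have dfa : ∀ x ∈ I, DifferentiableAt ℝ f x := fun x hx =>
    (hf3.differentiableOn (by norm_num)).differentiableAt (hIopen.mem_nhds hx)
  have dga : ∀ x ∈ I, DifferentiableAt ℝ g x := fun x hx =>
    (hg3.differentiableOn (by norm_num)).differentiableAt (hIopen.mem_nhds hx)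
  have df1a : ∀ x ∈ I, DifferentiableAt ℝ f1 x := fun x hx =>
    (hf2c.differentiableOn (by norm_num)).differentiableAt (hIopen.mem_nhds hx)
  have dg1a : ∀ x ∈ I, DifferentiableAt ℝ g1 x := fun x hx =>
    (hg2c.differentiableOn (by norm_num)).differentiableAt (hIopen.mem_nhds hx)
  have df2a : ∀ x ∈ I, DifferentiableAt ℝ f2 x := fun x hx =>
    (hf1c.differentiableOn (by norm_num)).differentiableAt (hIopen.mem_nhds hx)
  have dg2a : ∀ x ∈ I, DifferentiableAt ℝ g2 x := fun x hx =>
    (hg1c.differentiableOn (by norm_num)).differentiableAt (hIopen.mem_nhds hx)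
  -- step 1 : pd1 D
  have h1 : ∀ x ∈ I, ∀ y, pd1 D x y = f1 x * g y - f y * g1 x := by
    intro x hx y
    have : (fun u => D u y) = fun u => f u * g y - f y * g u := by
      funext u; rw [hD]
    rw [pd1, this, deriv_fun_sub ((dfa x hx).mul_const _) ((dga x hx).const_mul _),
      deriv_mul_const (dfa x hx), deriv_const_mul _ (dga x hx)]
  -- step 2 : pd1 (pd1 D)
  have h2 : ∀ x ∈ I, ∀ y, pd1 (pd1 D) x y = f2 x * g y - f y * g2 x := by
    intro x hx y
    have hev : (fun u => pd1 D u y) =ᶠ[nhds x] fun u => f1 u * g y - f y * g1 u := by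
      filter_upwards [hIopen.mem_nhds hx] with u hu using h1 u hu y
    rw [pd1, hev.deriv_eq, deriv_fun_sub ((df1a x hx).mul_const _) ((dg1a x hx).const_mul _),
      deriv_mul_const (df1a x hx), deriv_const_mul _ (dg1a x hx)]
  -- step 3 : pd1 (pd1 (pd1 D))
  have h3 : ∀ x ∈ I, ∀ y, pd1 (pd1 (pd1 D)) x y = deriv f2 x * g y - f y * deriv g2 x := by
    intro x hx y
    have hev : (fun u => pd1 (pd1 D) u y) =ᶠ[nhds x] fun u => f2 u * g y - f y * g2 u := by
      filter_upwards [hIopen.mem_nhds hx] with u hu using h2 u hu y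
    rw [pd1, hev.deriv_eq, deriv_fun_sub ((df2a x hx).mul_const _) ((dg2a x hx).const_mul _),
      deriv_mul_const (df2a x hx), deriv_const_mul _ (dg2a x hx)]
  -- step 4 : pd2 (pd1 (pd1 D)) x x
  have h4 : ∀ x ∈ I, pd2 (pd1 (pd1 D)) x x = f2 x * g1 x - f1 x * g2 x := by
    intro x hx
    have : (fun v => pd1 (pd1 D) x v) = fun v => f2 x * g v - f v * g2 x := by
      funext v; exact h2 x hx v
    rw [pd2, this, deriv_fun_sub ((dga x hx).const_mul _) ((dfa x hx).mul_const _),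
      deriv_const_mul _ (dga x hx), deriv_mul_const (dfa x hx)]
  intro x hx
  set W : ℝ → ℝ := fun u => f1 u * g u - f u * g1 u with hWdef
  set A : ℝ → ℝ := fun u => f2 u * g u - f u * g2 u with hAdef
  have hWx : W x ≠ 0 := by have := hW x hx; rwa [h1 x hx x] at this
  have hWd : ∀ u ∈ I, DifferentiableAt ℝ W u := fun u hu =>
    (((df1a u hu).mul (dga u hu)).sub ((dfa u hu).mul (dg1a u hu)))
  have hAd : ∀ u ∈ I, DifferentiableAt ℝ A u := fun u hu =>
    (((df2a u hu).mul (dga u hu)).sub ((dfa u hu).mul (dg2a u hu)))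
  have hWderiv : deriv W x = A x := by
    rw [hWdef, deriv_fun_sub ((df1a x hx).fun_mul (dga x hx)) ((dfa x hx).fun_mul (dg1a x hx)),
      deriv_fun_mul (df1a x hx) (dga x hx), deriv_fun_mul (dfa x hx) (dg1a x hx)]
    ring_nf
    try ring
  have hAderiv : deriv A x = deriv f2 x * g x + f2 x * g1 x - (f1 x * g2 x + f x * deriv g2 x) := by
    rw [hAdef, deriv_fun_sub ((df2a x hx).fun_mul (dga x hx)) ((dfa x hx).fun_mul (dg2a x hx)),
      deriv_fun_mul (df2a x hx) (dga x hx), deriv_fun_mul (dfa x hx) (dg2a x hx)]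
    try ring
  -- Φ eventually equals A/W
  have hΦev : Φ =ᶠ[nhds x] fun u => A u / W u := by
    filter_upwards [hIopen.mem_nhds hx] with u hu
    rw [hΦ u hu, h1 u hu u, h2 u hu u]
  have hΦderiv : deriv Φ x = (deriv A x * W x - A x * deriv W x) / (W x) ^ 2 := by
    rw [hΦev.deriv_eq, deriv_fun_div (hAd x hx) (hWd x hx) hWx]
  have hΦx : Φ x = A x / W x := by rw [hΦ x hx, h1 x hx x, h2 x hx x]
  rw [h3 x hx x, h1 x hx x, hΦderiv, hΦx, hΨ x hx, h4 x hx, h1 x hx x, hWderiv, hAderiv]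
  show (deriv f2 x * g x - f x * deriv g2 x) / W x = _
  simp only [show f1 x * g x - f x * g1 x = W x from rfl]
  field_simp
  ring
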